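/- Let n ≥ 1, let K ⊆ ℝⁿ be a nonempty closed set, and let s = (s_α)_{α∈ℕ₀ⁿ} be a K^♯-moment sequence, where K^♯ := {x ∈ ℝⁿ : x + K ⊆ K}. Then the linear map D(s) : ℝ[x₁,…,xₙ] → ℝ[x₁,…,xₙ], D(s)p = Σ_α (s_α/α!)·∂^α p, maps Pos(K) into Pos(K). -/

import Mathlib

open MeasureTheory MvPolynomial Filter Topology

/-- The iterated partial derivative `∂^α` on `ℝ[x₁,…,xₙ]`. -/
noncomputable def pd (n : ℕ) (α : Fin n →₀ ℕ) :
    MvPolynomial (Fin n) ℝ →ₗ[ℝ] MvPolynomial (Fin n) ℝ :=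
  (List.ofFn (fun i : Fin n =>
    (((MvPolynomial.pderiv i).toLinearMap : Module.End ℝ (MvPolynomial (Fin n) ℝ)) ^ (α i)))).prod

/-- The multi-factorial `α! = α₁!⋯αₙ!`. -/
def mfact (n : ℕ) (α : Fin n →₀ ℕ) : ℕ := ∏ i, Nat.factorial (α i)

/-- The monomial function `x ↦ x^α`. -/
def monomialFn (n : ℕ) (α : Fin n →₀ ℕ) : (Fin n → ℝ) → ℝ := fun x => ∏ i, x i ^ α i

/-- `s` is a `K`-moment sequence: there is a measure supported in `K` whose moments are `s`. -/
def IsMomentSeqOn (n : ℕ) (K : Set (Fin n → ℝ)) (s : (Fin n →₀ ℕ) → ℝ) : Prop :=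
  ∃ μ : Measure (Fin n → ℝ), μ Kᶜ = 0 ∧
    ∀ α : Fin n →₀ ℕ, Integrable (monomialFn n α) μ ∧ (∫ x, monomialFn n α x ∂μ) = s α

/-- `Pos(K)`, the polynomials nonnegative on `K`. -/
def PosOn (n : ℕ) (K : Set (Fin n → ℝ)) : Set (MvPolynomial (Fin n) ℝ) :=
  {f | ∀ x ∈ K, 0 ≤ MvPolynomial.eval x f}

/-- The operator `T = Σ_α q_α ∂^α` applied to `p` (the sum is finite since `∂^α p = 0`
for `|α| > deg p`). -/
noncomputable def applyOp (n : ℕ) (q : (Fin n →₀ ℕ) → MvPolynomial (Fin n) ℝ)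
    (p : MvPolynomial (Fin n) ℝ) : MvPolynomial (Fin n) ℝ :=
  ∑ᶠ α : Fin n →₀ ℕ, q α * pd n α p

/-- `K^♯ = {x : x + K ⊆ K}`. -/
def Ksharp (n : ℕ) (K : Set (Fin n → ℝ)) : Set (Fin n → ℝ) :=
  {x | ∀ y ∈ K, x + y ∈ K}

/-- `D(s) = Σ_α (s_α/α!) ∂^α` applied to `p`. -/
noncomputable def applyD (n : ℕ) (s : (Fin n →₀ ℕ) → ℝ) (p : MvPolynomial (Fin n) ℝ) :
    MvPolynomial (Fin n) ℝ :=
  ∑ᶠ α : Fin n →₀ ℕ, (s α / (mfact n α : ℝ)) • pd n α p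

/-- The exponential of an endomorphism of a finite-dimensional real vector space,
defined via the matrix exponential in a basis. -/
noncomputable def expEnd {M : Type*} [AddCommGroup M] [Module ℝ M] [FiniteDimensional ℝ M]
    (f : M →ₗ[ℝ] M) : M →ₗ[ℝ] M :=
  letI : DecidableEq (Module.Basis.ofVectorSpaceIndex ℝ M) := Classical.decEq _
  (Matrix.toLin (Module.Basis.ofVectorSpace ℝ M) (Module.Basis.ofVectorSpace ℝ M))
    (NormedSpace.exp
      ((LinearMap.toMatrix (Module.Basis.ofVectorSpace ℝ M) (Module.Basis.ofVectorSpace ℝ M)) f))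


lemma pow_pderiv_monomial (n : ℕ) (i : Fin n) (k : ℕ) (β : Fin n →₀ ℕ) (c : ℝ) :
    (((MvPolynomial.pderiv i).toLinearMap : Module.End ℝ (MvPolynomial (Fin n) ℝ)) ^ k)
      (monomial β c)
      = monomial (β - Finsupp.single i k) (c * ((β i).descFactorial k : ℝ)) := by
  induction k with
  | zero => simp
  | succ k ih =>
    rw [pow_succ', Module.End.mul_apply, ih]
    simp only [Derivation.coeFn_coe, pderiv_monomial]
    rw [Nat.descFactorial_succ]
    congr 1
    · rw [tsub_tsub, ← Finsupp.single_add]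
    · have h : (β - Finsupp.single i k) i = β i - k := by
        simp [Finsupp.tsub_apply]
      rw [h]
      push_cast
      ring

lemma list_prod_pderiv_monomial (n : ℕ) (α β : Fin n →₀ ℕ) (c : ℝ) :
    ∀ l : List (Fin n), l.Nodup →
    ((l.map fun i =>
        (((MvPolynomial.pderiv i).toLinearMap : Module.End ℝ (MvPolynomial (Fin n) ℝ)) ^ (α i))).prod)
      (monomial β c)
      = monomial (β - ∑ i ∈ l.toFinset, Finsupp.single i (α i))
          (c * ∏ i ∈ l.toFinset, ((β i).descFactorial (α i) : ℝ)) := by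
  intro l hl
  induction l with
  | nil => simp
  | cons i t ih =>
    have hit : i ∉ t := (List.nodup_cons.mp hl).1
    have hit' : i ∉ t.toFinset := by simpa using hit
    have ht : t.Nodup := (List.nodup_cons.mp hl).2
    rw [List.map_cons, List.prod_cons, Module.End.mul_apply, ih ht,
      pow_pderiv_monomial]
    have hSi : (∑ j ∈ t.toFinset, Finsupp.single j (α j)) i = 0 := by
      rw [Finsupp.finset_sum_apply]
      exact Finset.sum_eq_zero fun j hj => Finsupp.single_eq_of_ne' (by rintro rfl; exact hit' hj)
    have hβi : (β - ∑ j ∈ t.toFinset, Finsupp.single j (α j)) i = β i := by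
      simp [Finsupp.tsub_apply, hSi]
    rw [hβi, List.toFinset_cons, Finset.sum_insert hit', Finset.prod_insert hit']
    congr 1
    · rw [tsub_tsub, add_comm]
    · ring

lemma pd_monomial (n : ℕ) (α β : Fin n →₀ ℕ) (c : ℝ) :
    pd n α (monomial β c)
      = monomial (β - α) (c * ∏ i, ((β i).descFactorial (α i) : ℝ)) := by
  rw [pd, List.ofFn_eq_map]
  rw [list_prod_pderiv_monomial n α β c _ (List.nodup_finRange n)]
  have h : (∑ i : Fin n, Finsupp.single i (α i)) = α := by
    ext j
    rw [Finsupp.finset_sum_apply]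
    rw [Finset.sum_eq_single j (fun b _ hb => Finsupp.single_eq_of_ne' hb) (by simp)]
    simp
  rw [List.toFinset_finRange, h]

lemma mfact_ne_zero (n : ℕ) (α : Fin n →₀ ℕ) : (mfact n α : ℝ) ≠ 0 := by
  rw [mfact]
  push_cast
  exact Finset.prod_ne_zero_iff.mpr fun i _ => by
    exact_mod_cast Nat.cast_ne_zero.mpr (Nat.factorial_ne_zero _)

lemma pd_monomial_eq_zero (n : ℕ) (α β : Fin n →₀ ℕ) (c : ℝ) (h : ¬ α ≤ β) :
    pd n α (monomial β c) = 0 := by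
  rw [pd_monomial]
  obtain ⟨i, hi⟩ : ∃ i, ¬ α i ≤ β i := by
    by_contra hc
    push_neg at hc
    exact h (Finsupp.le_def.mpr hc)
  have : ((β i).descFactorial (α i) : ℝ) = 0 := by
    rw [Nat.descFactorial_eq_zero_iff_lt.mpr (by omega)]
    simp
  rw [Finset.prod_eq_zero (Finset.mem_univ i) this, mul_zero, map_zero]

lemma taylor_term (n : ℕ) (α β : Fin n →₀ ℕ) (c : ℝ) (x y : Fin n → ℝ) (hαβ : α ≤ β) :
    MvPolynomial.eval y (pd n α (monomial β c)) / (mfact n α : ℝ) * monomialFn n α x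
      = c * ∏ i, (x i ^ α i * y i ^ (β i - α i) * ((β i).choose (α i) : ℝ)) := by
  rw [pd_monomial, eval_monomial, Finsupp.prod_pow]
  have hdesc : (∏ i, ((β i).descFactorial (α i) : ℝ))
      = (mfact n α : ℝ) * ∏ i, ((β i).choose (α i) : ℝ) := by
    rw [mfact, Nat.cast_prod, ← Finset.prod_mul_distrib]
    apply Finset.prod_congr rfl
    intro i _
    exact_mod_cast Nat.descFactorial_eq_factorial_mul_choose (β i) (α i)
  have hsub : ∀ i, y i ^ ((β - α) i) = y i ^ (β i - α i) := fun i => by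
    rw [Finsupp.tsub_apply]
  rw [monomialFn, hdesc]
  simp only [hsub]
  rw [Finset.prod_mul_distrib, Finset.prod_mul_distrib]
  have h := mfact_ne_zero n α
  field_simp

lemma taylor_monomial (n : ℕ) (β : Fin n →₀ ℕ) (c : ℝ) (x y : Fin n → ℝ) :
    MvPolynomial.eval (x + y) (monomial β c)
      = ∑ α ∈ Finset.Iic β,
          MvPolynomial.eval y (pd n α (monomial β c)) / (mfact n α : ℝ) * monomialFn n α x := by
  have lhs : MvPolynomial.eval (x + y) (monomial β c) = c * ∏ i, (x i + y i) ^ β i := by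
    rw [eval_monomial, Finsupp.prod_pow]
    simp [Pi.add_apply]
  rw [lhs]
  have step1 : (∏ i, (x i + y i) ^ β i)
      = ∑ p ∈ Fintype.piFinset (fun i => Finset.range (β i + 1)),
          ∏ i, (x i ^ p i * y i ^ (β i - p i) * ((β i).choose (p i) : ℝ)) := by
    rw [show (∏ i, (x i + y i) ^ β i)
        = ∏ i, ∑ k ∈ Finset.range (β i + 1),
            (x i ^ k * y i ^ (β i - k) * ((β i).choose k : ℝ)) from
      Finset.prod_congr rfl fun i _ => add_pow (x i) (y i) (β i)]
    exact Finset.prod_univ_sum _ _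
  rw [step1, Finset.mul_sum]
  refine (Finset.sum_nbij' (i := fun (α : Fin n →₀ ℕ) => (α : Fin n → ℕ))
    (j := fun p => Finsupp.equivFunOnFinite.symm p) ?_ ?_ ?_ ?_ ?_).symm
  · intro α hα
    simp only [Fintype.mem_piFinset, Finset.mem_range]
    intro i
    have := (Finset.mem_Iic.mp hα) i
    omega
  · intro p hp
    simp only [Fintype.mem_piFinset, Finset.mem_range] at hp
    rw [Finset.mem_Iic, Finsupp.le_def]
    intro i
    have := hp i
    simp only [Finsupp.coe_equivFunOnFinite_symm]
    omega
  · intro α _; simp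
  · intro p _; exact Finsupp.equivFunOnFinite.apply_symm_apply p
  · intro α hα
    exact taylor_term n α β c x y (Finset.mem_Iic.mp hα)

noncomputable def bigSupp (n : ℕ) (f : MvPolynomial (Fin n) ℝ) : Finset (Fin n →₀ ℕ) :=
  f.support.biUnion fun β => Finset.Iic β

lemma pd_eq_zero_of_not_mem (n : ℕ) (f : MvPolynomial (Fin n) ℝ) (α : Fin n →₀ ℕ)
    (h : α ∉ bigSupp n f) : pd n α f = 0 := by
  conv_lhs => rw [f.as_sum]
  rw [map_sum]
  apply Finset.sum_eq_zero
  intro β hβ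
  apply pd_monomial_eq_zero
  intro hle
  exact h (Finset.mem_biUnion.mpr ⟨β, hβ, Finset.mem_Iic.mpr hle⟩)

lemma taylor_sum (n : ℕ) (f : MvPolynomial (Fin n) ℝ) (x y : Fin n → ℝ) :
    MvPolynomial.eval (x + y) f
      = ∑ α ∈ bigSupp n f,
          MvPolynomial.eval y (pd n α f) / (mfact n α : ℝ) * monomialFn n α x := by
  calc MvPolynomial.eval (x + y) f
      = ∑ β ∈ f.support, MvPolynomial.eval (x + y) (monomial β (coeff β f)) := by
        conv_lhs => rw [f.as_sum]
        rw [map_sum]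
    _ = ∑ β ∈ f.support, ∑ α ∈ bigSupp n f,
          MvPolynomial.eval y (pd n α (monomial β (coeff β f))) / (mfact n α : ℝ)
            * monomialFn n α x := by
        apply Finset.sum_congr rfl
        intro β hβ
        rw [taylor_monomial]
        apply Finset.sum_subset
        · intro α hα
          exact Finset.mem_biUnion.mpr ⟨β, hβ, hα⟩
        · intro α _ hα
          rw [pd_monomial_eq_zero n α β _ (fun hle => hα (Finset.mem_Iic.mpr hle))]
          simp
    _ = ∑ α ∈ bigSupp n f, ∑ β ∈ f.support,
          MvPolynomial.eval y (pd n α (monomial β (coeff β f))) / (mfact n α : ℝ)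
            * monomialFn n α x := Finset.sum_comm
    _ = ∑ α ∈ bigSupp n f,
          MvPolynomial.eval y (pd n α f) / (mfact n α : ℝ) * monomialFn n α x := by
        apply Finset.sum_congr rfl
        intro α _
        have h : ∑ β ∈ f.support, MvPolynomial.eval y (pd n α (monomial β (coeff β f)))
            = MvPolynomial.eval y (pd n α f) := by
          conv_rhs => rw [f.as_sum]
          rw [map_sum, map_sum]
        rw [← h, Finset.sum_div, Finset.sum_mul]


/-- if `s` is a `K^♯`-moment sequence then `D(s)` is a `K`-positivity
preserver. -/
theorem stmt7 (n : ℕ) (hn : 1 ≤ n) (K : Set (Fin n → ℝ)) (hKne : K.Nonempty)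
    (hKcl : IsClosed K) (s : (Fin n →₀ ℕ) → ℝ)
    (hs : IsMomentSeqOn n (Ksharp n K) s) :
    ∀ f ∈ PosOn n K, applyD n s f ∈ PosOn n K := by
  obtain ⟨μ, hμ, hmom⟩ := hs
  intro f hf y hy
  have hsupp : (Function.support fun α => (s α / (mfact n α : ℝ)) • pd n α f)
      ⊆ ↑(bigSupp n f) := by
    intro α hα
    by_contra h
    exact hα (by
      show (s α / (mfact n α : ℝ)) • pd n α f = 0
      rw [pd_eq_zero_of_not_mem n f α h, smul_zero])
  rw [applyD, finsum_eq_sum_of_support_subset _ hsupp, map_sum]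
  simp only [smul_eval]
  have key : ∀ α ∈ bigSupp n f, s α / (mfact n α : ℝ) * MvPolynomial.eval y (pd n α f)
      = ∫ x, MvPolynomial.eval y (pd n α f) / (mfact n α : ℝ) * monomialFn n α x ∂μ := by
    intro α _
    rw [MeasureTheory.integral_const_mul, (hmom α).2]
    ring
  rw [Finset.sum_congr rfl key,
    ← MeasureTheory.integral_finset_sum _ (fun α _ => ((hmom α).1.const_mul _))]
  apply integral_nonneg_of_ae
  have hae : ∀ᵐ x ∂μ, x ∈ Ksharp n K := by
    rw [MeasureTheory.ae_iff]
    exact hμ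
  filter_upwards [hae] with x hx
  rw [← taylor_sum n f x y]
  exact hf (x + y) (hx y hy)
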